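/- For every even integer L ≥ 2 and every real α > 0, the sum of α-th powers of the absolute values of all principal Pfaffian minors of the 2L×2L periodic critical XX-chain matrix equals the sum of α-th powers of the absolute values of all minors of the L×L periodic critical transverse-field Ising correlation matrix: Pf_α(R^PBC(2L)) = Det_α(G^PBC(L)). -/

import Mathlib

open scoped BigOperators Matrix

/-- The square submatrix of `A` with rows indexed by `I` and columns indexed by `J`
(both in increasing order), as a determinant; it is `0` if `I.card ≠ J.card`. -/
noncomputable def subdetR {N : ℕ} (A : Matrix (Fin N) (Fin N) ℝ) (I J : Finset (Fin N)) : ℝ :=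
  if h : J.card = I.card then
    Matrix.det (Matrix.of fun a b : Fin I.card =>
      A (I.orderEmbOfFin rfl a) (J.orderEmbOfFin h b))
  else 0

/-- `Det_β(A) = Σ_{k=0}^{N} Σ_{|I|=|J|=k} |det A[I,J]|^β`. -/
noncomputable def DetPowR {N : ℕ} (A : Matrix (Fin N) (Fin N) ℝ) (β : ℝ) : ℝ :=
  ∑ k ∈ Finset.range (N + 1),
    ∑ I ∈ Finset.univ.filter (fun I : Finset (Fin N) => I.card = k),
      ∑ J ∈ Finset.univ.filter (fun J : Finset (Fin N) => J.card = k),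
        |subdetR A I J| ^ β

/-- `Pf_β(R) = Σ_{S, |S| even} |det R[S,S]|^{β/2}`, the sum of β-th powers of the
absolute values of all principal Pfaffian minors of a skew-symmetric matrix. -/
noncomputable def PfPowR {N : ℕ} (R : Matrix (Fin N) (Fin N) ℝ) (β : ℝ) : ℝ :=
  ∑ S ∈ Finset.univ.filter (fun S : Finset (Fin N) => Even S.card),
    |subdetR R S S| ^ (β / 2)

/-- The periodic critical transverse-field Ising correlation matrix
`G^PBC_{jk} = ((-1)^{j-k}/L) csc(π(j-k+1/2)/L)`. -/
noncomputable def Gpbc (L : ℕ) : Matrix (Fin L) (Fin L) ℝ :=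
  Matrix.of fun j k =>
    (-1 : ℝ) ^ ((j : ℤ) - (k : ℤ)) / L *
      (Real.sin (Real.pi * (((j : ℝ) - (k : ℝ)) + 1 / 2) / L))⁻¹

/-- The periodic critical XX-chain matrix: antisymmetric, and for `1 ≤ j < k ≤ N`
(`j`, `k` one-based): `0` if `j+k` is even, and
`(-1)^{(j+k+1)/2} (2/N) csc(π(j-k)/N)` if `j+k` is odd. -/
noncomputable def Rpbc (N : ℕ) : Matrix (Fin N) (Fin N) ℝ :=
  Matrix.of fun j k =>
    let J : ℕ := (j : ℕ) + 1
    let K : ℕ := (k : ℕ) + 1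
    if J < K then
      (if (J + K) % 2 = 0 then 0
       else (-1 : ℝ) ^ ((J + K + 1) / 2) * (2 / N) *
         (Real.sin (Real.pi * ((J : ℝ) - (K : ℝ)) / N))⁻¹)
    else if K < J then
      -(if (K + J) % 2 = 0 then 0
        else (-1 : ℝ) ^ ((K + J + 1) / 2) * (2 / N) *
          (Real.sin (Real.pi * ((K : ℝ) - (J : ℝ)) / N))⁻¹)
    else 0


open Matrix

section Aux

variable {L : ℕ}

/-- doubling map `a ↦ 2a`. -/
def d0 (a : Fin L) : Fin (2 * L) := ⟨2 * a.val, by have := a.isLt; omega⟩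
/-- doubling map `a ↦ 2a+1`. -/
def d1 (a : Fin L) : Fin (2 * L) := ⟨2 * a.val + 1, by have := a.isLt; omega⟩

lemma neg_one_zpow_sub (m n : ℕ) : ((-1:ℝ) ^ ((m:ℤ) - (n:ℤ))) = (-1) ^ (m + n) := by
  rw [zpow_sub₀ (by norm_num : (-1:ℝ) ≠ 0), zpow_natCast, zpow_natCast, pow_add,
    div_eq_mul_inv, ← inv_pow, inv_neg, inv_one]

lemma Rpbc_antisymm (N : ℕ) (j k : Fin N) : Rpbc N j k = - Rpbc N k j := by
  simp only [Rpbc, Matrix.of_apply]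
  split_ifs <;> first | (exfalso; omega) | ring

lemma Rpbc_d0_d0 (a b : Fin L) : Rpbc (2 * L) (d0 a) (d0 b) = 0 := by
  simp only [Rpbc, d0, Matrix.of_apply]
  rcases lt_trichotomy a.val b.val with h | h | h
  · rw [if_pos (by omega), if_pos (by omega)]
  · rw [if_neg (by omega), if_neg (by omega)]
  · rw [if_neg (by omega), if_pos (by omega), if_pos (by omega), neg_zero]

lemma Rpbc_d1_d1 (a b : Fin L) : Rpbc (2 * L) (d1 a) (d1 b) = 0 := by
  simp only [Rpbc, d1, Matrix.of_apply]
  rcases lt_trichotomy a.val b.val with h | h | h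
  · rw [if_pos (by omega), if_pos (by omega)]
  · rw [if_neg (by omega), if_neg (by omega)]
  · rw [if_neg (by omega), if_pos (by omega), if_pos (by omega), neg_zero]

lemma Rpbc_d1_d0 (hL : 0 < L) (a b : Fin L) :
    Rpbc (2 * L) (d1 a) (d0 b) = Gpbc L a b := by
  have hLR : (0:ℝ) < (L:ℝ) := by exact_mod_cast hL
  simp only [Rpbc, d1, d0, Matrix.of_apply, Gpbc]
  rcases lt_or_ge a.val b.val with h | h
  · rw [if_pos (by omega), if_neg (by omega)]
    have e1 : (2 * a.val + 1 + 1 + (2 * b.val + 1) + 1) / 2 = a.val + b.val + 2 := by omega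
    rw [e1]
    have e2 : Real.pi * ((↑(2 * a.val + 1 + 1) : ℝ) - ↑(2 * b.val + 1)) / (↑(2 * L))
        = Real.pi * (((a : ℝ) - (b : ℝ)) + 1 / 2) / L := by
      push_cast
      rw [div_eq_div_iff (by positivity) (by positivity)]
      ring
    rw [e2, neg_one_zpow_sub]
    have e3 : ((2:ℝ) / (↑(2 * L))) = 1 / L := by
      rw [div_eq_div_iff (by positivity) (by positivity)]
      push_cast
      ring
    rw [e3, pow_add]
    push_cast
    ring
  · rw [if_neg (by omega), if_pos (by omega), if_neg (by omega)]
    have e1 : (2 * b.val + 1 + (2 * a.val + 1 + 1) + 1) / 2 = a.val + b.val + 2 := by omega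
    rw [e1]
    have e2 : Real.pi * ((↑(2 * b.val + 1) : ℝ) - ↑(2 * a.val + 1 + 1)) / (↑(2 * L))
        = -(Real.pi * (((a : ℝ) - (b : ℝ)) + 1 / 2) / L) := by
      push_cast
      rw [neg_div', div_eq_div_iff (by positivity) (by positivity)]
      ring
    rw [e2, Real.sin_neg, neg_one_zpow_sub]
    have e3 : ((2:ℝ) / (↑(2 * L))) = 1 / L := by
      rw [div_eq_div_iff (by positivity) (by positivity)]
      push_cast
      ring
    rw [e3, pow_add]
    push_cast
    ring

lemma Rpbc_d0_d1 (hL : 0 < L) (a b : Fin L) :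
    Rpbc (2 * L) (d0 b) (d1 a) = -(Gpbc L a b) := by
  rw [Rpbc_antisymm, Rpbc_d1_d0 hL]

lemma abs_det_fromBlocks_sq {k : ℕ} (B C : Matrix (Fin k) (Fin k) ℝ) :
    |(fromBlocks 0 B C 0).det| = |B.det| * |C.det| := by
  have h1 : fromBlocks (0 : Matrix (Fin k) (Fin k) ℝ) B C 0
      = (fromBlocks C 0 0 B).submatrix (Equiv.sumComm (Fin k) (Fin k)) id := by
    ext x y
    cases x <;> cases y <;> simp [fromBlocks]
  rw [h1, Matrix.det_permute, Matrix.det_fromBlocks_zero₂₁, abs_mul, abs_mul]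
  rcases Int.units_eq_one_or (Equiv.Perm.sign (Equiv.sumComm (Fin k) (Fin k))) with h | h <;>
    simp [h, mul_comm]

lemma det_fromBlocks_offdiag_ne {p q : ℕ} (hpq : p ≠ q)
    (B : Matrix (Fin p) (Fin q) ℝ) (C : Matrix (Fin q) (Fin p) ℝ) :
    (fromBlocks 0 B C 0).det = 0 := by
  rw [Matrix.det_apply]
  apply Finset.sum_eq_zero
  intro σ _
  rw [show (∏ i, fromBlocks (0 : Matrix (Fin p) (Fin p) ℝ) B C 0 (σ i) i) = 0 from ?_, smul_zero]
  by_contra hne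
  have hz : ∀ i, fromBlocks (0 : Matrix (Fin p) (Fin p) ℝ) B C 0 (σ i) i ≠ 0 := by
    intro i hi
    exact hne (Finset.prod_eq_zero (Finset.mem_univ i) hi)
  have h1 : ∀ a : Fin p, ∃ b : Fin q, σ (Sum.inl a) = Sum.inr b := by
    intro a
    rcases h : σ (Sum.inl a) with b | b
    · exact absurd (show fromBlocks (0 : Matrix (Fin p) (Fin p) ℝ) B C 0 (σ (Sum.inl a)) (Sum.inl a) = 0 by simp [h, fromBlocks]) (hz (Sum.inl a))
    · exact ⟨b, rfl⟩
  have h2 : ∀ b : Fin q, ∃ a : Fin p, σ (Sum.inr b) = Sum.inl a := by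
    intro b
    rcases h : σ (Sum.inr b) with a | a
    · exact ⟨a, rfl⟩
    · exact absurd (show fromBlocks (0 : Matrix (Fin p) (Fin p) ℝ) B C 0 (σ (Sum.inr b)) (Sum.inr b) = 0 by simp [h, fromBlocks]) (hz (Sum.inr b))
  choose f hf using h1
  choose g hg using h2
  have hfi : Function.Injective f := by
    intro a a' h
    have := σ.injective (by rw [hf a, hf a', h] : σ (Sum.inl a) = σ (Sum.inl a'))
    exact Sum.inl_injective this
  have hgi : Function.Injective g := by
    intro b b' h
    have := σ.injective (by rw [hg b, hg b', h] : σ (Sum.inr b) = σ (Sum.inr b'))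
    exact Sum.inr_injective this
  have := Fintype.card_le_of_injective f hfi
  have := Fintype.card_le_of_injective g hgi
  simp at *
  omega

/-- Reindexing a principal minor of `Rpbc (2L)` on `J·2 ∪ (I·2+1)` as an off-diagonal
block matrix. -/
lemma subdet_eq_blocks (I J : Finset (Fin L)) {k l : ℕ} (hI : I.card = k) (hJ : J.card = l) :
    subdetR (Rpbc (2*L)) (J.image d0 ∪ I.image d1) (J.image d0 ∪ I.image d1)
    = (fromBlocks (0 : Matrix (Fin l) (Fin l) ℝ)
        (Matrix.of fun a b => Rpbc (2*L) (d0 (J.orderEmbOfFin hJ a)) (d1 (I.orderEmbOfFin hI b)))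
        (Matrix.of fun b a => Rpbc (2*L) (d1 (I.orderEmbOfFin hI b)) (d0 (J.orderEmbOfFin hJ a)))
        0).det := by
  classical
  set eJ := J.orderEmbOfFin hJ with heJ
  set eI := I.orderEmbOfFin hI with heI
  set τ : Fin l ⊕ Fin k → Fin (2*L) :=
    Sum.elim (fun a : Fin l => d0 (eJ a)) (fun b : Fin k => d1 (eI b)) with hτ
  set S : Finset (Fin (2*L)) := J.image d0 ∪ I.image d1 with hS
  have hτinj : Function.Injective τ := by
    rintro (x | x) (y | y) h <;>
      simp only [hτ, Sum.elim_inl, Sum.elim_inr, d0, d1, Fin.mk.injEq] at h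
    · exact congrArg Sum.inl (eJ.injective (Fin.ext (by omega)))
    · omega
    · omega
    · exact congrArg Sum.inr (eI.injective (Fin.ext (by omega)))
  have hrange : Set.range τ = ↑S := by
    ext x
    constructor
    · rintro ⟨(a | b), rfl⟩
      · exact Finset.mem_coe.mpr (Finset.mem_union_left _
          (Finset.mem_image_of_mem d0 (Finset.orderEmbOfFin_mem J hJ a)))
      · exact Finset.mem_coe.mpr (Finset.mem_union_right _
          (Finset.mem_image_of_mem d1 (Finset.orderEmbOfFin_mem I hI b)))
    · intro hx
      rcases Finset.mem_union.mp (Finset.mem_coe.mp hx) with h | h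
      · obtain ⟨j, hj, rfl⟩ := Finset.mem_image.mp h
        obtain ⟨a, ha⟩ : j ∈ Set.range eJ := by
          rw [heJ, Finset.range_orderEmbOfFin]; exact hj
        exact ⟨Sum.inl a, by simp [hτ, ha]⟩
      · obtain ⟨j, hj, rfl⟩ := Finset.mem_image.mp h
        obtain ⟨b, hb⟩ : j ∈ Set.range eI := by
          rw [heI, Finset.range_orderEmbOfFin]; exact hj
        exact ⟨Sum.inr b, by simp [hτ, hb]⟩
  have heSinj : Function.Injective ⇑(S.orderEmbOfFin rfl) := (S.orderEmbOfFin rfl).injective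
  have hrangeS : Set.range ⇑(S.orderEmbOfFin rfl) = ↑S := Finset.range_orderEmbOfFin S rfl
  set ρ : (Fin l ⊕ Fin k) ≃ Fin S.card :=
    (Equiv.ofInjective τ hτinj).trans ((Equiv.setCongr (hrange.trans hrangeS.symm)).trans
      (Equiv.ofInjective _ heSinj).symm) with hρdef
  have hρ : ∀ x, S.orderEmbOfFin rfl (ρ x) = τ x := by
    intro x
    have := Equiv.apply_ofInjective_symm heSinj
      (⟨τ x, by rw [hrangeS, ← hrange]; exact Set.mem_range_self x⟩ : Set.range ⇑(S.orderEmbOfFin rfl))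
    exact this
  rw [subdetR, dif_pos rfl]
  rw [← Matrix.det_submatrix_equiv_self ρ
    (Matrix.of fun a b : Fin S.card =>
      Rpbc (2*L) (S.orderEmbOfFin rfl a) (S.orderEmbOfFin rfl b))]
  congr 1
  ext x y
  cases x <;> cases y <;>
    simp [Matrix.submatrix_apply, hρ, hτ, fromBlocks, Rpbc_d0_d0, Rpbc_d1_d1]

/-- Key identity: the principal minor of `Rpbc` on `J·2 ∪ (I·2+1)` is, in absolute
value, the square of the `(I,J)` minor of `Gpbc`. -/
lemma key_abs (hL : 0 < L) (I J : Finset (Fin L)) :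
    |subdetR (Rpbc (2*L)) (J.image d0 ∪ I.image d1) (J.image d0 ∪ I.image d1)|
      = |subdetR (Gpbc L) I J| ^ (2:ℕ) := by
  by_cases h : J.card = I.card
  · rw [subdet_eq_blocks I J rfl h]
    set M : Matrix (Fin I.card) (Fin I.card) ℝ :=
      Matrix.of fun a b => Gpbc L (I.orderEmbOfFin rfl a) (J.orderEmbOfFin h b) with hM
    have hB : (Matrix.of fun a b =>
        Rpbc (2*L) (d0 (J.orderEmbOfFin h a)) (d1 (I.orderEmbOfFin rfl b))) = -Mᵀ := by
      ext a b
      simp [hM, Rpbc_d0_d1 hL]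
    have hC : (Matrix.of fun b a =>
        Rpbc (2*L) (d1 (I.orderEmbOfFin rfl b)) (d0 (J.orderEmbOfFin h a))) = M := by
      ext a b
      simp [hM, Rpbc_d1_d0 hL]
    rw [hB, hC, abs_det_fromBlocks_sq, Matrix.det_neg, Matrix.det_transpose, abs_mul,
      abs_pow, abs_neg, abs_one, one_pow, one_mul, subdetR, dif_pos h]
    rw [← hM]
    ring
  · rw [subdet_eq_blocks I J rfl rfl, det_fromBlocks_offdiag_ne h _ _, abs_zero,
      subdetR, dif_neg h, abs_zero, zero_pow two_ne_zero]

/-- Halves of the odd entries of `S`. -/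
def Iof (S : Finset (Fin (2*L))) : Finset (Fin L) :=
  (S.filter (fun x => x.val % 2 = 1)).image (fun x => ⟨x.val / 2, by have := x.isLt; omega⟩)

/-- Halves of the even entries of `S`. -/
def Jof (S : Finset (Fin (2*L))) : Finset (Fin L) :=
  (S.filter (fun x => x.val % 2 = 0)).image (fun x => ⟨x.val / 2, by have := x.isLt; omega⟩)

lemma recon (S : Finset (Fin (2*L))) : (Jof S).image d0 ∪ (Iof S).image d1 = S := by
  ext x
  simp only [Finset.mem_union, Finset.mem_image, Jof, Iof, Finset.mem_filter]
  constructor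
  · rintro (⟨y, ⟨a, ⟨haS, hp⟩, rfl⟩, hx⟩ | ⟨y, ⟨a, ⟨haS, hp⟩, rfl⟩, hx⟩)
    · have : x = a := by
        rw [← hx]
        exact Fin.ext (by simp [d0]; try omega)
      rwa [this]
    · have : x = a := by
        rw [← hx]
        exact Fin.ext (by simp [d1]; try omega)
      rwa [this]
  · intro hxS
    rcases Nat.mod_two_eq_zero_or_one x.val with hp | hp
    · exact Or.inl ⟨⟨x.val / 2, by have := x.isLt; omega⟩, ⟨x, ⟨hxS, hp⟩, rfl⟩,
        Fin.ext (by simp [d0]; try omega)⟩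
    · exact Or.inr ⟨⟨x.val / 2, by have := x.isLt; omega⟩, ⟨x, ⟨hxS, hp⟩, rfl⟩,
        Fin.ext (by simp [d1]; try omega)⟩

lemma Iof_recon (I J : Finset (Fin L)) : Iof (J.image d0 ∪ I.image d1) = I := by
  ext x
  simp only [Iof, Finset.mem_image, Finset.mem_filter, Finset.mem_union]
  constructor
  · rintro ⟨a, ⟨h | h, hp⟩, rfl⟩
    · obtain ⟨j, _, rfl⟩ := h
      exact absurd hp (by simp [d0]; try omega)
    · obtain ⟨i, hi, rfl⟩ := h
      have : (⟨(d1 i).val / 2, by have := (d1 i).isLt; omega⟩ : Fin L) = i :=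
        Fin.ext (by simp [d1]; try omega)
      rwa [this]
  · intro hx
    exact ⟨d1 x, ⟨Or.inr ⟨x, hx, rfl⟩, by simp [d1]; try omega⟩,
      Fin.ext (by simp [d1]; try omega)⟩

lemma Jof_recon (I J : Finset (Fin L)) : Jof (J.image d0 ∪ I.image d1) = J := by
  ext x
  simp only [Jof, Finset.mem_image, Finset.mem_filter, Finset.mem_union]
  constructor
  · rintro ⟨a, ⟨h | h, hp⟩, rfl⟩
    · obtain ⟨j, hj, rfl⟩ := h
      have : (⟨(d0 j).val / 2, by have := (d0 j).isLt; omega⟩ : Fin L) = j :=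
        Fin.ext (by simp [d0]; try omega)
      rwa [this]
    · obtain ⟨i, _, rfl⟩ := h
      exact absurd hp (by simp [d1]; try omega)
  · intro hx
    exact ⟨d0 x, ⟨Or.inl ⟨x, hx, rfl⟩, by simp [d0]⟩,
      Fin.ext (by simp [d0]; try omega)⟩

lemma d0_injective : Function.Injective (d0 (L := L)) := by
  intro a b h
  exact Fin.ext (by have := congrArg Fin.val h; simp [d0] at this; omega)

lemma d1_injective : Function.Injective (d1 (L := L)) := by
  intro a b h
  exact Fin.ext (by have := congrArg Fin.val h; simp [d1] at this; omega)

lemma card_split (S : Finset (Fin (2*L))) : S.card = (Jof S).card + (Iof S).card := by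
  conv_lhs => rw [← recon S]
  rw [Finset.card_union_of_disjoint, Finset.card_image_of_injective _ d0_injective,
    Finset.card_image_of_injective _ d1_injective]
  rw [Finset.disjoint_left]
  rintro x hx hx'
  obtain ⟨a, _, rfl⟩ := Finset.mem_image.mp hx
  obtain ⟨b, _, hb⟩ := Finset.mem_image.mp hx'
  have := congrArg Fin.val hb
  simp [d0, d1] at this
  omega

end Aux

/-- **Stabilizer–Shannon correspondence, periodic case.**  For every even
`L ≥ 2` and every real `α > 0`,
`Pf_α(R^PBC(2L)) = Det_α(G^PBC(L))`. -/
theorem pf_det_correspondence_pbc (L : ℕ) (hL : Even L) (hL2 : 2 ≤ L) :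
    ∀ α : ℝ, 0 < α → PfPowR (Rpbc (2 * L)) α = DetPowR (Gpbc L) α := by
  intro α hα
  have hL0 : 0 < L := by omega
  have hαne : α ≠ 0 := ne_of_gt hα
  have key : ∀ S : Finset (Fin (2*L)),
      |subdetR (Rpbc (2*L)) S S| = |subdetR (Gpbc L) (Iof S) (Jof S)| ^ (2:ℕ) := by
    intro S
    conv_lhs => rw [← recon S]
    exact key_abs hL0 (Iof S) (Jof S)
  have lhs1 : PfPowR (Rpbc (2*L)) α
      = ∑ S : Finset (Fin (2*L)), |subdetR (Gpbc L) (Iof S) (Jof S)| ^ α := by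
    rw [PfPowR, Finset.sum_subset (Finset.filter_subset (fun S : Finset (Fin (2*L)) =>
      Even S.card) Finset.univ) ?hz]
    · apply Finset.sum_congr rfl
      intro S _
      rw [key S, ← Real.rpow_natCast, ← Real.rpow_mul (abs_nonneg _)]
      norm_num
      congr 1
      ring
    case hz =>
      intro S _ hS
      simp only [Finset.mem_filter, Finset.mem_univ, true_and] at hS
      have hne : (Jof S).card ≠ (Iof S).card := by
        intro hEq
        exact hS (by rw [card_split S, hEq]; exact ⟨_, rfl⟩)
      rw [key S, subdetR, dif_neg hne, abs_zero, zero_pow two_ne_zero,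
        Real.zero_rpow (div_ne_zero hαne two_ne_zero)]
  have rhs1 : DetPowR (Gpbc L) α
      = ∑ I : Finset (Fin L), ∑ J : Finset (Fin L), |subdetR (Gpbc L) I J| ^ α := by
    rw [DetPowR, ← Finset.sum_fiberwise_of_maps_to (g := fun I : Finset (Fin L) => I.card)
      (t := Finset.range (L+1))
      (fun I _ => Finset.mem_range.mpr (by
        have h1 := Finset.card_le_univ I
        simp only [Finset.card_univ, Fintype.card_fin] at h1
        exact Nat.lt_succ_of_le h1))
      (fun I => ∑ J : Finset (Fin L), |subdetR (Gpbc L) I J| ^ α)]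
    apply Finset.sum_congr rfl
    intro k _
    apply Finset.sum_congr rfl
    intro I hI
    simp only [Finset.mem_filter, Finset.mem_univ, true_and] at hI
    apply Finset.sum_subset (Finset.filter_subset _ _)
    intro J _ hJ
    simp only [Finset.mem_filter, Finset.mem_univ, true_and] at hJ
    rw [subdetR, dif_neg (by rw [hI]; exact hJ), abs_zero, Real.zero_rpow hαne]
  rw [lhs1, rhs1, ← Finset.sum_product']
  exact Finset.sum_nbij' (fun S => (Iof S, Jof S))
    (fun p => (p.2.image d0) ∪ (p.1.image d1))
    (fun S _ => Finset.mem_product.mpr ⟨Finset.mem_univ _, Finset.mem_univ _⟩)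
    (fun p _ => Finset.mem_univ _)
    (fun S _ => recon S)
    (fun p _ => Prod.ext (Iof_recon p.1 p.2) (Jof_recon p.1 p.2))
    (fun S _ => rfl)
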